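/- Let φ = ∃X∀Y Θ be a quantified Boolean formula where Θ is quantifier-free and in disjunctive normal form with all variables among X ∪ Y. If φ is true, then the formula f(φ) is an instance of a binary tautology. -/

import Mathlib

namespace CirquentCalc

/-- Formulas: literals (negation applied only to atoms), ∧, ∨. -/
inductive Fml where
  | pos : ℕ → Fml
  | neg : ℕ → Fml
  | and : Fml → Fml → Fml
  | or : Fml → Fml → Fml
deriving DecidableEq

namespace Fml

/-- Negation (pushed to atoms, as ¬ applies only to atoms). -/
def negate : Fml → Fml
  | pos n => neg n
  | neg n => pos n
  | and a b => or a.negate b.negate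
  | or a b => and a.negate b.negate

/-- Substitution extended homomorphically. -/
def subst (σ : ℕ → Fml) : Fml → Fml
  | pos n => σ n
  | neg n => (σ n).negate
  | and a b => and (a.subst σ) (b.subst σ)
  | or a b => or (a.subst σ) (b.subst σ)

/-- Classical evaluation under a truth assignment. -/
def eval (v : ℕ → Bool) : Fml → Bool
  | pos n => v n
  | neg n => !(v n)
  | and a b => a.eval v && b.eval v
  | or a b => a.eval v || b.eval v

/-- Number of positive occurrences of atom `a`. -/
def cPos (a : ℕ) : Fml → ℕ
  | pos n => if n = a then 1 else 0
  | neg _ => 0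
  | and f g => f.cPos a + g.cPos a
  | or f g => f.cPos a + g.cPos a

/-- Number of negative occurrences of atom `a`. -/
def cNeg (a : ℕ) : Fml → ℕ
  | pos _ => 0
  | neg n => if n = a then 1 else 0
  | and f g => f.cNeg a + g.cNeg a
  | or f g => f.cNeg a + g.cNeg a

/-- Total number of positive occurrences of atoms. -/
def posOcc : Fml → ℕ
  | pos _ => 1
  | neg _ => 0
  | and f g => f.posOcc + g.posOcc
  | or f g => f.posOcc + g.posOcc

/-- Length: total number of occurrences of literals and connectives. -/
def len : Fml → ℕ
  | pos _ => 1
  | neg _ => 1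
  | and f g => f.len + g.len + 1
  | or f g => f.len + g.len + 1

/-- Number of occurrences of ∧. -/
def nAnd : Fml → ℕ
  | pos _ => 0
  | neg _ => 0
  | and f g => f.nAnd + g.nAnd + 1
  | or f g => f.nAnd + g.nAnd

/-- Number of occurrences of ∨. -/
def nOr : Fml → ℕ
  | pos _ => 0
  | neg _ => 0
  | and f g => f.nOr + g.nOr
  | or f g => f.nOr + g.nOr + 1

end Fml

def Tautology (A : Fml) : Prop := ∀ v, A.eval v = true

/-- No atom has more than two occurrences. -/
def Binary (A : Fml) : Prop := ∀ a, A.cPos a + A.cNeg a ≤ 2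

/-- Whenever an atom occurs twice, one occurrence is positive and one negative. -/
def Normal (A : Fml) : Prop := ∀ a, A.cPos a ≤ 1 ∧ A.cNeg a ≤ 1

def AtomicLevel (σ : ℕ → Fml) : Prop := ∀ n, ∃ m, σ n = Fml.pos m

/-- `F` is an instance of `B`: σ(B) = F for some substitution σ. -/
def InstanceOf (F B : Fml) : Prop := ∃ σ, B.subst σ = F

/-- `F` is an atomic-level instance of `B`. -/
def AtomicInstanceOf (F B : Fml) : Prop := ∃ σ, AtomicLevel σ ∧ B.subst σ = F

/-- A cirquent: a pool of (occurrences of) formulas, and a list of ogroups,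
each an (index-)set of oformulas of the pool. -/
structure Cirquent where
  pool : List Fml
  groups : List (Finset ℕ)

def emptyCirquent : Cirquent := ⟨[], []⟩

def idCirquent (F : Fml) : Cirquent := ⟨[F.negate, F], [{0, 1}]⟩

/-- The cirquent with pool ⟨F⟩ and one ogroup containing F. -/
def fmlCirquent (F : Fml) : Cirquent := ⟨[F], [{0}]⟩

/-- Index renaming swapping `i` and `i+1`. -/
def swapIdx (i : ℕ) : ℕ → ℕ := fun j => if j = i then i + 1 else if j = i + 1 then i else j

/-- Index renaming when a new oformula is inserted at position `i`. -/
def insShift (i : ℕ) : ℕ → ℕ := fun j => if j < i then j else j + 1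

/-- Index renaming when the oformulas at positions `i`, `i+1` are merged into one at `i`. -/
def mergeIdx (i : ℕ) : ℕ → ℕ := fun j => if j ≤ i then j else j - 1

/-- Mix: placing the two premise cirquents side by side. -/
def MixStep (A B C : Cirquent) : Prop :=
  C.pool = A.pool ++ B.pool ∧
  C.groups = A.groups ++ B.groups.map (Finset.image (· + A.pool.length))

/-- Oformula exchange: swap two adjacent oformulas, preserving containment. -/
def OfExchStep (P C : Cirquent) : Prop :=
  ∃ (l₁ l₂ : List Fml) (F G : Fml),
    P.pool = l₁ ++ F :: G :: l₂ ∧ C.pool = l₁ ++ G :: F :: l₂ ∧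
    C.groups = P.groups.map (Finset.image (swapIdx l₁.length))

/-- Ogroup exchange: swap two adjacent ogroups. -/
def OgExchStep (P C : Cirquent) : Prop :=
  C.pool = P.pool ∧
  ∃ (g₁ g₂ : List (Finset ℕ)) (Γ Δ : Finset ℕ),
    P.groups = g₁ ++ Γ :: Δ :: g₂ ∧ C.groups = g₁ ++ Δ :: Γ :: g₂

/-- Pool weakening: insert a new oformula, contained in no ogroup. -/
def PoolWeakStep (P C : Cirquent) : Prop :=
  ∃ (l₁ l₂ : List Fml) (F : Fml),
    P.pool = l₁ ++ l₂ ∧ C.pool = l₁ ++ F :: l₂ ∧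
    C.groups = P.groups.map (Finset.image (insShift l₁.length))

/-- Ogroup weakening: add a new arc between a pre-existing ogroup and oformula. -/
def OgWeakStep (P C : Cirquent) : Prop :=
  C.pool = P.pool ∧
  ∃ (g₁ g₂ : List (Finset ℕ)) (Γ : Finset ℕ) (j : ℕ),
    j < P.pool.length ∧ j ∉ Γ ∧
    P.groups = g₁ ++ Γ :: g₂ ∧ C.groups = g₁ ++ insert j Γ :: g₂

/-- Downward duplication: replace an ogroup by two adjacent copies of it. -/
def DupDownStep (P C : Cirquent) : Prop :=
  C.pool = P.pool ∧
  ∃ (g₁ g₂ : List (Finset ℕ)) (Γ : Finset ℕ),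
    P.groups = g₁ ++ Γ :: g₂ ∧ C.groups = g₁ ++ Γ :: Γ :: g₂

/-- Upward duplication: the converse of downward duplication. -/
def DupUpStep (P C : Cirquent) : Prop :=
  C.pool = P.pool ∧
  ∃ (g₁ g₂ : List (Finset ℕ)) (Γ : Finset ℕ),
    P.groups = g₁ ++ Γ :: Γ :: g₂ ∧ C.groups = g₁ ++ Γ :: g₂

/-- ∨-introduction: merge two adjacent oformulas F, G into F ∨ G. -/
def OrIntroStep (P C : Cirquent) : Prop :=
  ∃ (l₁ l₂ : List Fml) (F G : Fml),
    P.pool = l₁ ++ F :: G :: l₂ ∧ C.pool = l₁ ++ (Fml.or F G) :: l₂ ∧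
    C.groups = P.groups.map (Finset.image (mergeIdx l₁.length))

/-- The merging of the ogroup list in ∧-introduction: no ogroup contains both `i`
and `i+1`; every ogroup containing `i` is immediately followed by one containing
`i+1` and vice versa; such pairs are merged. -/
inductive AndMerge (i : ℕ) : List (Finset ℕ) → List (Finset ℕ) → Prop where
  | nil : AndMerge i [] []
  | skip {Γ : Finset ℕ} {l l' : List (Finset ℕ)} :
      i ∉ Γ → (i + 1) ∉ Γ → AndMerge i l l' → AndMerge i (Γ :: l) (Γ :: l')
  | merge {Γ Δ : Finset ℕ} {l l' : List (Finset ℕ)} :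
      i ∈ Γ → (i + 1) ∉ Γ → (i + 1) ∈ Δ → i ∉ Δ →
      AndMerge i l l' → AndMerge i (Γ :: Δ :: l) ((Γ ∪ Δ) :: l')

/-- ∧-introduction. -/
def AndIntroStep (P C : Cirquent) : Prop :=
  ∃ (l₁ l₂ : List Fml) (F G : Fml) (merged : List (Finset ℕ)),
    P.pool = l₁ ++ F :: G :: l₂ ∧ C.pool = l₁ ++ (Fml.and F G) :: l₂ ∧
    AndMerge l₁.length P.groups merged ∧
    C.groups = merged.map (Finset.image (mergeIdx l₁.length))

inductive RuleName where
  | emptyAx | idAx | mix | ofExch | ogExch | poolWeak | ogWeak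
  | dupDown | dupUp | orIntro | andIntro
deriving DecidableEq

/-- The unary (one-premise) rules, by name. -/
def unRel : RuleName → Cirquent → Cirquent → Prop
  | .ofExch => OfExchStep
  | .ogExch => OgExchStep
  | .poolWeak => PoolWeakStep
  | .ogWeak => OgWeakStep
  | .dupDown => DupDownStep
  | .dupUp => DupUpStep
  | .orIntro => OrIntroStep
  | .andIntro => AndIntroStep
  | _ => fun _ _ => False

/-- Proof trees: each node is labeled by its cirquent and the rule used. -/
inductive PTree where
  | leaf (C : Cirquent) (r : RuleName)
  | un (C : Cirquent) (r : RuleName) (p : PTree)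
  | bin (C : Cirquent) (r : RuleName) (p q : PTree)

namespace PTree

def concl : PTree → Cirquent
  | leaf C _ => C
  | un C _ _ => C
  | bin C _ _ _ => C

/-- Validity: each node follows from its children by the named rule. -/
def Valid : PTree → Prop
  | leaf C r =>
      (r = .emptyAx ∧ C = emptyCirquent) ∨ (r = .idAx ∧ ∃ F, C = idCirquent F)
  | un C r p => p.Valid ∧ unRel r p.concl C
  | bin C r p q => p.Valid ∧ q.Valid ∧ r = .mix ∧ MixStep p.concl q.concl C

/-- Number of applications of rule `r` in the proof. -/
def count (r : RuleName) : PTree → ℕ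
  | leaf _ r' => if r' = r then 1 else 0
  | un _ r' p => (if r' = r then 1 else 0) + p.count r
  | bin _ r' p q => (if r' = r then 1 else 0) + p.count r + q.count r

/-- The cirquents occurring in the proof. -/
def cirquents : PTree → List Cirquent
  | leaf C _ => [C]
  | un C _ p => C :: p.cirquents
  | bin C _ p q => C :: (p.cirquents ++ q.cirquents)

/-- Total number of rule applications (nodes). -/
def nodes : PTree → ℕ
  | leaf _ _ => 1
  | un _ _ p => p.nodes + 1
  | bin _ _ p q => p.nodes + q.nodes + 1

/-- Number of leaves of the proof tree. -/
def leavesCount : PTree → ℕ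
  | leaf _ _ => 1
  | un _ _ p => p.leavesCount
  | bin _ _ p q => p.leavesCount + q.leavesCount

end PTree

/-- A proof uses no duplication. -/
def DupFree (p : PTree) : Prop :=
  p.count RuleName.dupDown = 0 ∧ p.count RuleName.dupUp = 0

/-- Provability of a cirquent in CL5. -/
def ProvesC (C : Cirquent) : Prop := ∃ p : PTree, p.Valid ∧ p.concl = C

/-- Provability of a formula in CL5. -/
def ProvesCL5 (F : Fml) : Prop := ∃ p : PTree, p.Valid ∧ p.concl = fmlCirquent F

/-- Provability of a formula in CL5⁻ (CL5 without duplication). -/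
def ProvesCL5m (F : Fml) : Prop :=
  ∃ p : PTree, p.Valid ∧ DupFree p ∧ p.concl = fmlCirquent F

/-- Number of arcs of a cirquent (sum of the sizes of its ogroups). -/
def Cirquent.arcs (C : Cirquent) : ℕ := (C.groups.map Finset.card).sum

/-- Size of a cirquent: sum of the lengths of the oformulas in its pool plus
the sum of the sizes of its ogroups. -/
def Cirquent.size (C : Cirquent) : ℕ := (C.pool.map Fml.len).sum + C.arcs

/-- Size of a proof: the sum of the sizes of the cirquents it contains. -/
def PTree.size (p : PTree) : ℕ := (p.cirquents.map Cirquent.size).sum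

/-- Total number of positive occurrences of atoms in the pool. -/
def Cirquent.poolPosOcc (C : Cirquent) : ℕ := (C.pool.map Fml.posOcc).sum

end CirquentCalc

namespace CirquentCalc

/-! The TQBF-Σ₂ reduction. A literal is a pair (atom, polarity); a quantifier-free
Boolean formula in disjunctive normal form is a list of conjunctions of literals. -/

abbrev Lit := ℕ × Bool
abbrev DNF := List (List Lit)

def evalLit (b : ℕ → Bool) (l : Lit) : Bool := if l.2 then b l.1 else !(b l.1)

def evalDNF (b : ℕ → Bool) (Θ : DNF) : Bool := Θ.any fun c => c.all (evalLit b)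

/-- ∃X∀Y Θ is true: some assignment to X makes Θ true under every extension. -/
def QBFTrue (X : Finset ℕ) (Θ : DNF) : Prop :=
  ∃ a : ℕ → Bool, ∀ b : ℕ → Bool, (∀ x ∈ X, b x = a x) → evalDNF b Θ = true

/-- Injective code for the fresh atoms used in f(φ). -/
def code (t z i j : ℕ) : ℕ := Nat.pair t (Nat.pair z (Nat.pair i j))

/-- The fresh atom Z^z. -/
def Zc (z : ℕ) : ℕ := code 0 z 0 0
/-- The fresh atom uᵢ^z. -/
def uc (z i : ℕ) : ℕ := code 1 z i 0
/-- The fresh atom vⱼ^z. -/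
def vc (z j : ℕ) : ℕ := code 2 z j 0
/-- The fresh atom P_{i,j}^y. -/
def Pc (y i j : ℕ) : ℕ := code 3 y i j
/-- A spare fresh atom (for degenerate empty disjunctions/conjunctions). -/
def dAtom : ℕ := code 4 0 0 0

/-- ⊥ as an abbreviation (used only in degenerate cases). -/
def botQ : Fml := Fml.and (Fml.pos dAtom) (Fml.neg dAtom)
/-- ⊤ as an abbreviation (used only in degenerate cases). -/
def topQ : Fml := Fml.or (Fml.pos dAtom) (Fml.neg dAtom)

/-- Disjunction of a list of formulas. -/
def bigOrQ (d : Fml) : List Fml → Fml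
  | [] => d
  | [a] => a
  | a :: b :: r => Fml.or a (bigOrQ d (b :: r))

/-- Conjunction of a list of formulas. -/
def bigAndQ (d : Fml) : List Fml → Fml
  | [] => d
  | [a] => a
  | a :: b :: r => Fml.and a (bigAndQ d (b :: r))

/-- Number of occurrences of the literal (z, s) in a list of literals. -/
def cnt (L : List Lit) (z : ℕ) (s : Bool) : ℕ := (L.filter fun l => l == (z, s)).length

/-- g(z) := Z^z ∧ (Z^z → u₁^z ∧ ⋯ ∧ u_{k^z}^z) ∧ (Z^z → ¬v₁^z ∧ ⋯ ∧ ¬v_{t^z}^z),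
a conjunct being omitted when k^z resp. t^z is 0; A → B is ¬A ∨ B. -/
def gz (flat : List Lit) (z : ℕ) : Fml :=
  let k := cnt flat z true
  let t := cnt flat z false
  let c1 : List Fml :=
    if k = 0 then [] else
      [Fml.or (Fml.neg (Zc z))
        (bigAndQ topQ ((List.range k).map fun i => Fml.pos (uc z (i + 1))))]
  let c2 : List Fml :=
    if t = 0 then [] else
      [Fml.or (Fml.neg (Zc z))
        (bigAndQ topQ ((List.range t).map fun j => Fml.neg (vc z (j + 1))))]
  bigAndQ topQ (Fml.pos (Zc z) :: (c1 ++ c2))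

/-- The index of the occurrence (1-based, counted among occurrences of the same
literal) of the literal at global position `w` of the flattened DNF. -/
def occIdx (flat : List Lit) (w : ℕ) (l : Lit) : ℕ := cnt (flat.take w) l.1 l.2 + 1

/-- Replacement of the literal `l` occurring at global position `w`:
an occurrence of z ∈ X becomes the corresponding uᵢ^z (resp. ¬vⱼ^z); an
occurrence of y ∉ X becomes the corresponding disjunction of P-literals. -/
def repl (X : Finset ℕ) (flat : List Lit) (w : ℕ) (l : Lit) : Fml :=
  let i := occIdx flat w l
  if l.1 ∈ X then
    if l.2 then Fml.pos (uc l.1 i) else Fml.neg (vc l.1 i)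
  else
    if l.2 then
      bigOrQ botQ ((List.range (cnt flat l.1 false)).map fun j =>
        Fml.pos (Pc l.1 i (j + 1)))
    else
      bigOrQ botQ ((List.range (cnt flat l.1 true)).map fun i' =>
        Fml.neg (Pc l.1 (i' + 1) i))

/-- Pair each literal of a conjunction with its global position, starting at `w`. -/
def idxConj : ℕ → List Lit → List (ℕ × Lit)
  | _, [] => []
  | w, a :: r => (w, a) :: idxConj (w + 1) r

/-- Pair each literal of a DNF with its global position. -/
def idxDNF : ℕ → DNF → List (List (ℕ × Lit))
  | _, [] => []
  | w, c :: r => idxConj w c :: idxDNF (w + c.length) r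

/-- The consequent of f(φ): Θ with each literal occurrence replaced. -/
def consequentQ (X : Finset ℕ) (Θ : DNF) : Fml :=
  let flat := Θ.flatten
  bigOrQ botQ ((idxDNF 0 Θ).map fun c =>
    bigAndQ topQ (c.map fun p => repl X flat p.1 p.2))

/-- f(φ) := (g(z₁) ∧ ⋯ ∧ g(z_l)) → Σ, where → is ¬A ∨ B with negation pushed
to atoms (when X is empty the antecedent is absent). -/
def fQBF (X : Finset ℕ) (Θ : DNF) : Fml :=
  match (X.sort (· ≤ ·)).map (gz Θ.flatten) with
  | [] => consequentQ X Θ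
  | g :: gs => Fml.or (Fml.negate (bigAndQ topQ (g :: gs))) (consequentQ X Θ)

end CirquentCalc

namespace CirquentCalc
namespace Fml

@[simp] lemma negate_negate : ∀ F : Fml, F.negate.negate = F
  | pos _ => rfl
  | neg _ => rfl
  | and a b => by simp [negate, negate_negate a, negate_negate b]
  | or a b => by simp [negate, negate_negate a, negate_negate b]

lemma subst_negate (σ : ℕ → Fml) : ∀ F : Fml, F.negate.subst σ = (F.subst σ).negate
  | pos _ => rfl
  | neg n => by simp [negate, subst]
  | and a b => by simp [negate, subst, subst_negate σ a, subst_negate σ b]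
  | or a b => by simp [negate, subst, subst_negate σ a, subst_negate σ b]

lemma eval_negate (v : ℕ → Bool) : ∀ F : Fml, F.negate.eval v = !(F.eval v)
  | pos _ => rfl
  | neg n => by simp [negate, eval]
  | and a b => by simp [negate, eval, eval_negate v a, eval_negate v b]
  | or a b => by simp [negate, eval, eval_negate v a, eval_negate v b]

/-- The list of all atom occurrences. -/
def atomsL : Fml → List ℕ
  | pos n => [n]
  | neg n => [n]
  | and a b => a.atomsL ++ b.atomsL
  | or a b => a.atomsL ++ b.atomsL

lemma occ_eq_count (m : ℕ) : ∀ F : Fml, F.cPos m + F.cNeg m = F.atomsL.count m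
  | pos n => by simp [cPos, cNeg, atomsL, List.count_cons]
  | neg n => by simp [cPos, cNeg, atomsL, List.count_cons]
  | and a b => by
      simp [cPos, cNeg, atomsL, List.count_append, ← occ_eq_count m a, ← occ_eq_count m b]
      omega
  | or a b => by
      simp [cPos, cNeg, atomsL, List.count_append, ← occ_eq_count m a, ← occ_eq_count m b]
      omega

@[simp] lemma atomsL_negate : ∀ F : Fml, F.negate.atomsL = F.atomsL
  | pos _ => rfl
  | neg _ => rfl
  | and a b => by simp [negate, atomsL, atomsL_negate a, atomsL_negate b]
  | or a b => by simp [negate, atomsL, atomsL_negate a, atomsL_negate b]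

end Fml

lemma binary_of_count (B : Fml) (h : ∀ m, B.atomsL.count m ≤ 2) : Binary B := by
  intro a; rw [Fml.occ_eq_count]; exact h a

/- bigAndQ / bigOrQ lemmas -/
lemma subst_bigAndQ (σ : ℕ → Fml) (d : Fml) :
    ∀ L : List Fml, (bigAndQ d L).subst σ = bigAndQ (d.subst σ) (L.map (Fml.subst σ))
  | [] => rfl
  | [a] => rfl
  | a :: b :: r => by
      simp only [bigAndQ, Fml.subst, List.map]
      rw [show (bigAndQ d (b :: r)).subst σ = _ from subst_bigAndQ σ d (b :: r)]
      rfl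

lemma subst_bigOrQ (σ : ℕ → Fml) (d : Fml) :
    ∀ L : List Fml, (bigOrQ d L).subst σ = bigOrQ (d.subst σ) (L.map (Fml.subst σ))
  | [] => rfl
  | [a] => rfl
  | a :: b :: r => by
      simp only [bigOrQ, Fml.subst, List.map]
      rw [show (bigOrQ d (b :: r)).subst σ = _ from subst_bigOrQ σ d (b :: r)]
      rfl

lemma atomsL_bigAndQ (d : Fml) :
    ∀ L : List Fml, L ≠ [] → (bigAndQ d L).atomsL = (L.map Fml.atomsL).flatten
  | [a], _ => by simp [bigAndQ, Fml.atomsL]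
  | a :: b :: r, _ => by
      simp only [bigAndQ, Fml.atomsL, List.map, List.flatten]
      rw [atomsL_bigAndQ d (b :: r) (by simp)]
      rfl

lemma atomsL_bigOrQ (d : Fml) :
    ∀ L : List Fml, L ≠ [] → (bigOrQ d L).atomsL = (L.map Fml.atomsL).flatten
  | [a], _ => by simp [bigOrQ, Fml.atomsL]
  | a :: b :: r, _ => by
      simp only [bigOrQ, Fml.atomsL, List.map, List.flatten]
      rw [atomsL_bigOrQ d (b :: r) (by simp)]
      rfl

lemma eval_bigAndQ (v : ℕ → Bool) (d : Fml) :
    ∀ L : List Fml, L ≠ [] →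
      ((bigAndQ d L).eval v = true ↔ ∀ A ∈ L, A.eval v = true)
  | [a], _ => by simp [bigAndQ]
  | a :: b :: r, _ => by
      simp only [bigAndQ, Fml.eval, Bool.and_eq_true]
      rw [eval_bigAndQ v d (b :: r) (by simp)]
      simp

lemma eval_bigOrQ (v : ℕ → Bool) (d : Fml) :
    ∀ L : List Fml, L ≠ [] →
      ((bigOrQ d L).eval v = true ↔ ∃ A ∈ L, A.eval v = true)
  | [a], _ => by simp [bigOrQ]
  | a :: b :: r, _ => by
      simp only [bigOrQ, Fml.eval, Bool.or_eq_true]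
      rw [eval_bigOrQ v d (b :: r) (by simp)]
      simp

/- counting helpers -/
lemma count_flatten (m : ℕ) : ∀ LL : List (List ℕ),
    LL.flatten.count m = (LL.map (List.count m)).sum
  | [] => rfl
  | l :: r => by simp [List.flatten, List.count_append, count_flatten m r]

lemma sum_count_le {α : Type*} (c : ℕ) :
    ∀ (L : List α) (f : α → ℕ), (∀ p ∈ L, f p ≤ c) →
      (∀ p ∈ L, ∀ q ∈ L, f p ≠ 0 → f q ≠ 0 → p = q) → L.Nodup →
      (L.map f).sum ≤ c
  | [], _, _, _, _ => Nat.zero_le c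
  | a :: L, f, hc, hu, hN => by
      simp only [List.map, List.sum_cons]
      by_cases ha : f a = 0
      · rw [ha]
        simpa using sum_count_le c L f (fun p hp => hc p (List.mem_cons_of_mem _ hp))
          (fun p hp q hq => hu p (List.mem_cons_of_mem _ hp) q (List.mem_cons_of_mem _ hq))
          (List.Nodup.of_cons hN)
      · have hz : (L.map f).sum = 0 := by
          rw [List.sum_eq_zero_iff]
          intro x hx
          rcases List.mem_map.1 hx with ⟨q, hq, rfl⟩
          by_contra hq0
          have := hu q (List.mem_cons_of_mem _ hq) a (List.mem_cons_self) hq0 ha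
          subst this
          exact (List.nodup_cons.1 hN).1 hq
        rw [hz]
        simpa using hc a (List.mem_cons_self)

end CirquentCalc

namespace CirquentCalc

/- code arithmetic -/
@[simp] lemma code_tag (t z i j : ℕ) : (code t z i j).unpair.1 = t := by
  simp [code]
@[simp] lemma code_z (t z i j : ℕ) : (code t z i j).unpair.2.unpair.1 = z := by
  simp [code]
@[simp] lemma code_i (t z i j : ℕ) : (code t z i j).unpair.2.unpair.2.unpair.1 = i := by
  simp [code]
@[simp] lemma code_j (t z i j : ℕ) : (code t z i j).unpair.2.unpair.2.unpair.2 = j := by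
  simp [code]
lemma code_inj {t z i j t' z' i' j' : ℕ} (h : code t z i j = code t' z' i' j') :
    t = t' ∧ z = z' ∧ i = i' ∧ j = j' := by
  simp only [code, Nat.pair_eq_pair] at h
  tauto

/- cnt lemmas -/
lemma cnt_append (L₁ L₂ : List Lit) (z : ℕ) (s : Bool) :
    cnt (L₁ ++ L₂) z s = cnt L₁ z s + cnt L₂ z s := by
  simp [cnt, List.filter_append]

lemma cnt_cons_self (l : Lit) (L : List Lit) :
    cnt (l :: L) l.1 l.2 = cnt L l.1 l.2 + 1 := by
  simp [cnt, List.filter_cons]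

lemma cnt_take_lt {flat : List Lit} {w : ℕ} {l : Lit} (h : flat[w]? = some l) :
    cnt (flat.take w) l.1 l.2 < cnt flat l.1 l.2 := by
  have hw : w < flat.length := by
    by_contra hc
    rw [List.getElem?_eq_none (by omega)] at h
    cases h
  have hdrop : flat.drop w = l :: flat.drop (w + 1) := by
    rw [List.drop_eq_getElem_cons hw]
    congr 1
    have := List.getElem?_eq_getElem hw
    rw [this] at h
    exact Option.some.inj h
  conv_rhs => rw [← List.take_append_drop w flat]
  rw [cnt_append, hdrop, cnt_cons_self]
  omega

lemma cnt_take_mono {flat : List Lit} {w w' : ℕ} {l : Lit} (h : flat[w]? = some l)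
    (hlt : w < w') :
    cnt (flat.take w) l.1 l.2 < cnt (flat.take w') l.1 l.2 := by
  have hw : w < flat.length := by
    by_contra hc
    rw [List.getElem?_eq_none (by omega)] at h
    cases h
  have h1 : flat.take (w + 1) = flat.take w ++ [l] := by
    rw [List.take_succ]
    have := List.getElem?_eq_getElem hw
    rw [this] at h
    rw [← Option.some.inj h]
    simp [List.getElem?_eq_getElem hw]
  have h2 : flat.take w' = flat.take (w+1) ++ (flat.drop (w+1)).take (w' - (w+1)) := by
    rw [← List.take_add]
    congr 1
    omega
  rw [h2, cnt_append, h1, cnt_append, cnt_cons_self]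
  simp [cnt]
  omega

lemma occIdx_inj {flat : List Lit} {w w' : ℕ} {l : Lit}
    (h : flat[w]? = some l) (h' : flat[w']? = some l)
    (he : occIdx flat w l = occIdx flat w' l) : w = w' := by
  rcases Nat.lt_trichotomy w w' with hlt | heq | hgt
  · have := cnt_take_mono h hlt
    simp [occIdx] at he
    omega
  · exact heq
  · have := cnt_take_mono h' hgt
    simp [occIdx] at he
    omega

/- idxConj facts -/
lemma idxConj_append (w : ℕ) (L₁ L₂ : List Lit) :
    idxConj w (L₁ ++ L₂) = idxConj w L₁ ++ idxConj (w + L₁.length) L₂ := by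
  induction L₁ generalizing w with
  | nil => simp [idxConj]
  | cons a r ih =>
      simp only [List.cons_append, idxConj, List.length_cons]
      rw [ih (w+1),
        show w + 1 + r.length = w + (r.length + 1) by omega]

lemma mem_idxConj {p : ℕ × Lit} {w : ℕ} : ∀ {L : List Lit}, p ∈ idxConj w L →
    ∃ j, j < L.length ∧ p.1 = w + j ∧ L[j]? = some p.2 := by
  intro L
  induction L generalizing w with
  | nil => intro h; simp [idxConj] at h
  | cons a r ih =>
      intro h
      simp only [idxConj, List.mem_cons] at h
      rcases h with h | h
      · exact ⟨0, by simp, by simp [h], by simp [h]⟩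
      · rcases ih h with ⟨j, hj, hp, hg⟩
        exact ⟨j + 1, by simpa using hj, by omega, by simpa using hg⟩

lemma mem_idxConj_fst_ge {p : ℕ × Lit} {w : ℕ} {L : List Lit} (h : p ∈ idxConj w L) :
    w ≤ p.1 := by
  rcases mem_idxConj h with ⟨j, _, hp, _⟩; omega

lemma nodup_idxConj (w : ℕ) : ∀ L : List Lit, (idxConj w L).Nodup := by
  intro L
  induction L generalizing w with
  | nil => simp [idxConj]
  | cons a r ih =>
      simp only [idxConj, List.nodup_cons]
      refine ⟨fun hmem => ?_, ih (w+1)⟩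
      have := mem_idxConj_fst_ge hmem
      omega

lemma idxConj_fst_inj {p q : ℕ × Lit} {w : ℕ} {L : List Lit}
    (hp : p ∈ idxConj w L) (hq : q ∈ idxConj w L) (h : p.1 = q.1) : p = q := by
  induction L generalizing w with
  | nil => simp [idxConj] at hp
  | cons a r ih =>
      simp only [idxConj, List.mem_cons] at hp hq
      rcases hp with hp | hp <;> rcases hq with hq | hq
      · rw [hp, hq]
      · have := mem_idxConj_fst_ge hq; subst hp; simp at h; omega
      · have := mem_idxConj_fst_ge hp; subst hq; simp at h; omega
      · exact ih hp hq

lemma getElem?_of_mem_idxConj {p : ℕ × Lit} {L : List Lit} (h : p ∈ idxConj 0 L) :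
    L[p.1]? = some p.2 := by
  rcases mem_idxConj h with ⟨j, _, hp, hg⟩
  rw [hp]; simpa using hg

lemma snd_mem_of_mem_idxConj {p : ℕ × Lit} {w : ℕ} {L : List Lit}
    (h : p ∈ idxConj w L) : p.2 ∈ L := by
  rcases mem_idxConj h with ⟨j, hj, _, hg⟩
  rw [List.getElem?_eq_getElem hj] at hg
  rw [← Option.some.inj hg]
  exact List.getElem_mem hj

end CirquentCalc

namespace CirquentCalc

def Cc (z : ℕ) : ℕ := code 5 z 0 0
def Tc (n : ℕ) : ℕ := code 6 n 0 0
def Bc (w : ℕ) : ℕ := code 7 w 0 0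
def Kc : ℕ := code 8 0 0 0

def topA (m : ℕ) : Fml := .or (.pos m) (.neg m)
def botA (m : ℕ) : Fml := .and (.pos m) (.neg m)

def imp1 (flat : List Lit) (z : ℕ) : Fml :=
  .or (.neg (Zc z)) (bigAndQ topQ ((List.range (cnt flat z true)).map fun i => .pos (uc z (i+1))))
def imp2 (flat : List Lit) (z : ℕ) : Fml :=
  .or (.neg (Zc z)) (bigAndQ topQ ((List.range (cnt flat z false)).map fun j => .neg (vc z (j+1))))

/-- The binarized version of g(z): when both implication conjuncts are present,
the one not needed (according to the witness assignment `a`) is collapsed to the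
single fresh atom `Cc z`. -/
def gB (a : ℕ → Bool) (flat : List Lit) (z : ℕ) : Fml :=
  if cnt flat z true = 0 then
    (if cnt flat z false = 0 then .pos (Zc z) else .and (.pos (Zc z)) (imp2 flat z))
  else if cnt flat z false = 0 then .and (.pos (Zc z)) (imp1 flat z)
  else if a z then .and (.pos (Zc z)) (.and (imp1 flat z) (.pos (Cc z)))
  else .and (.pos (Zc z)) (.and (.pos (Cc z)) (imp2 flat z))

/-- Binarized literal replacement: like `repl` but with fresh ⊥-atoms per position. -/
def replB (X : Finset ℕ) (flat : List Lit) (w : ℕ) (l : Lit) : Fml :=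
  let i := occIdx flat w l
  if l.1 ∈ X then
    if l.2 then .pos (uc l.1 i) else .neg (vc l.1 i)
  else
    if l.2 then
      bigOrQ (botA (Bc w)) ((List.range (cnt flat l.1 false)).map fun j => .pos (Pc l.1 i (j+1)))
    else
      bigOrQ (botA (Bc w)) ((List.range (cnt flat l.1 true)).map fun i' => .neg (Pc l.1 (i'+1) i))

/-- Enumeration of conjuncts with conjunct index and starting position. -/
def CL : ℕ → ℕ → DNF → List (ℕ × ℕ × List Lit)
  | _, _, [] => []
  | n, w, c :: r => (n, w, c) :: CL (n+1) (w + c.length) r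

def conjB (X : Finset ℕ) (flat : List Lit) (t : ℕ × ℕ × List Lit) : Fml :=
  bigAndQ (topA (Tc t.1)) ((idxConj t.2.1 t.2.2).map fun p => replB X flat p.1 p.2)

def CbB (X : Finset ℕ) (Θ : DNF) : Fml :=
  bigOrQ (botA Kc) ((CL 0 0 Θ).map (conjB X Θ.flatten))

/-- The binary tautology. -/
def BB (a : ℕ → Bool) (X : Finset ℕ) (Θ : DNF) : Fml :=
  match (X.sort (· ≤ ·)).map (gB a Θ.flatten) with
  | [] => CbB X Θ
  | g :: gs => .or (Fml.negate (bigAndQ topQ (g :: gs))) (CbB X Θ)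

/-- The substitution witnessing that fQBF is an instance of BB. -/
def σB (a : ℕ → Bool) (flat : List Lit) : ℕ → Fml := fun m =>
  if m.unpair.1 = 5 then
    (if a m.unpair.2.unpair.1 then imp2 flat m.unpair.2.unpair.1
     else imp1 flat m.unpair.2.unpair.1)
  else if m.unpair.1 = 6 ∨ m.unpair.1 = 7 ∨ m.unpair.1 = 8 then .pos dAtom
  else .pos m

/- CL facts -/
lemma mem_CL_fst_ge {t : ℕ × ℕ × List Lit} : ∀ {n w : ℕ} {Θ : DNF}, t ∈ CL n w Θ → n ≤ t.1 := by
  intro n w Θ h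
  induction Θ generalizing n w with
  | nil => simp [CL] at h
  | cons c r ih =>
      simp only [CL, List.mem_cons] at h
      rcases h with h | h
      · simp [h]
      · have := ih h; omega

lemma CL_fst_inj {t t' : ℕ × ℕ × List Lit} : ∀ {n w : ℕ} {Θ : DNF},
    t ∈ CL n w Θ → t' ∈ CL n w Θ → t.1 = t'.1 → t = t' := by
  intro n w Θ ht ht' he
  induction Θ generalizing n w with
  | nil => simp [CL] at ht
  | cons c r ih =>
      simp only [CL, List.mem_cons] at ht ht'
      rcases ht with ht | ht <;> rcases ht' with ht' | ht'
      · rw [ht, ht']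
      · have := mem_CL_fst_ge ht'; subst ht; simp at he; omega
      · have := mem_CL_fst_ge ht; subst ht'; simp at he; omega
      · exact ih ht ht'

lemma nodup_CL : ∀ (n w : ℕ) (Θ : DNF), (CL n w Θ).Nodup := by
  intro n w Θ
  induction Θ generalizing n w with
  | nil => simp [CL]
  | cons c r ih =>
      simp only [CL, List.nodup_cons]
      exact ⟨fun hmem => by have := mem_CL_fst_ge hmem; simp at this, ih _ _⟩

lemma CL_entries_flatten : ∀ (Θ : DNF) (n w : ℕ),
    ((CL n w Θ).map (fun t => idxConj t.2.1 t.2.2)).flatten = idxConj w Θ.flatten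
  | [], _, _ => rfl
  | c :: r, n, w => by
      simp only [CL, List.map, List.flatten_cons]
      rw [CL_entries_flatten r (n+1) (w + c.length), idxConj_append]

lemma mem_CL_entry {t : ℕ × ℕ × List Lit} {n w : ℕ} {Θ : DNF} (ht : t ∈ CL n w Θ)
    {p : ℕ × Lit} (hp : p ∈ idxConj t.2.1 t.2.2) : p ∈ idxConj w Θ.flatten := by
  rw [← CL_entries_flatten Θ n w]
  exact List.mem_flatten.2 ⟨_, List.mem_map_of_mem ht, hp⟩

lemma exists_CL_of_mem {c : List Lit} : ∀ {Θ : DNF} (n w : ℕ), c ∈ Θ →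
    ∃ t ∈ CL n w Θ, t.2.2 = c := by
  intro Θ
  induction Θ with
  | nil => intro n w h; simp at h
  | cons c' r ih =>
      intro n w h
      rcases List.mem_cons.1 h with h | h
      · exact ⟨(n, w, c'), by simp [CL], h.symm⟩
      · rcases ih (n+1) (w + c'.length) h with ⟨t, ht, he⟩
        exact ⟨t, by simp [CL, ht], he⟩

end CirquentCalc

namespace CirquentCalc

variable {a : ℕ → Bool} {flat : List Lit}

@[simp] lemma σB_Zc (z : ℕ) : σB a flat (Zc z) = .pos (Zc z) := by simp [σB, Zc]
@[simp] lemma σB_uc (z i : ℕ) : σB a flat (uc z i) = .pos (uc z i) := by simp [σB, uc]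
@[simp] lemma σB_vc (z j : ℕ) : σB a flat (vc z j) = .pos (vc z j) := by simp [σB, vc]
@[simp] lemma σB_Pc (y i j : ℕ) : σB a flat (Pc y i j) = .pos (Pc y i j) := by simp [σB, Pc]
@[simp] lemma σB_dAtom : σB a flat dAtom = .pos dAtom := by simp [σB, dAtom]
@[simp] lemma σB_Cc (z : ℕ) :
    σB a flat (Cc z) = if a z then imp2 flat z else imp1 flat z := by simp [σB, Cc]
@[simp] lemma σB_Tc (n : ℕ) : σB a flat (Tc n) = .pos dAtom := by simp [σB, Tc]
@[simp] lemma σB_Bc (w : ℕ) : σB a flat (Bc w) = .pos dAtom := by simp [σB, Bc]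
@[simp] lemma σB_Kc : σB a flat Kc = .pos dAtom := by simp [σB, Kc]

@[simp] lemma subst_and (σ : ℕ → Fml) (f g : Fml) :
    (Fml.and f g).subst σ = .and (f.subst σ) (g.subst σ) := rfl
@[simp] lemma subst_or (σ : ℕ → Fml) (f g : Fml) :
    (Fml.or f g).subst σ = .or (f.subst σ) (g.subst σ) := rfl
@[simp] lemma subst_pos (σ : ℕ → Fml) (n : ℕ) : (Fml.pos n).subst σ = σ n := rfl
@[simp] lemma subst_neg (σ : ℕ → Fml) (n : ℕ) : (Fml.neg n).subst σ = (σ n).negate := rfl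

@[simp] lemma subst_topQ : topQ.subst (σB a flat) = topQ := by
  simp [topQ, Fml.subst, Fml.negate]
@[simp] lemma subst_topA_Tc (n : ℕ) : (topA (Tc n)).subst (σB a flat) = topQ := by
  simp [topA, topQ, Fml.subst, Fml.negate]
@[simp] lemma subst_botA_Bc (w : ℕ) : (botA (Bc w)).subst (σB a flat) = botQ := by
  simp [botA, botQ, Fml.subst, Fml.negate]
@[simp] lemma subst_botA_Kc : (botA Kc).subst (σB a flat) = botQ := by
  simp [botA, botQ, Fml.subst, Fml.negate]

lemma subst_imp1 (z : ℕ) : (imp1 flat z).subst (σB a flat) = imp1 flat z := by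
  simp only [imp1, subst_or, subst_neg, subst_bigAndQ, subst_topQ, σB_Zc,
    List.map_map, Function.comp_def, subst_pos, σB_uc]
  rfl

lemma subst_imp2 (z : ℕ) : (imp2 flat z).subst (σB a flat) = imp2 flat z := by
  simp only [imp2, subst_or, subst_neg, subst_bigAndQ, subst_topQ, σB_Zc,
    List.map_map, Function.comp_def, σB_vc, Fml.negate_negate]
  rfl

lemma gz_eq (z : ℕ) : gz flat z = bigAndQ topQ (.pos (Zc z) ::
    ((if cnt flat z true = 0 then [] else [imp1 flat z]) ++
     (if cnt flat z false = 0 then [] else [imp2 flat z]))) := rfl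

lemma subst_gB (z : ℕ) : (gB a flat z).subst (σB a flat) = gz flat z := by
  rw [gz_eq, gB]
  by_cases hk : cnt flat z true = 0 <;> by_cases ht : cnt flat z false = 0 <;>
    simp only [hk, ht, if_pos, if_neg, if_true, if_false, reduceIte]
  · simp [bigAndQ]
  · simp [bigAndQ, subst_imp2]
  · simp [bigAndQ, subst_imp1]
  · by_cases ha : a z <;>
      simp [ha, bigAndQ, subst_imp1, subst_imp2]

lemma subst_replB (X : Finset ℕ) (w : ℕ) (l : Lit) :
    (replB X flat w l).subst (σB a flat) = repl X flat w l := by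
  simp only [replB, repl]
  by_cases hX : l.1 ∈ X
  · by_cases hs : l.2 = true <;> simp [hX, hs, Fml.negate]
  · by_cases hs : l.2 = true <;>
      simp [hX, hs, subst_bigOrQ, List.map_map, Function.comp_def, Fml.negate]

lemma subst_conjB (X : Finset ℕ) (t : ℕ × ℕ × List Lit) :
    (conjB X flat t).subst (σB a flat) =
      bigAndQ topQ ((idxConj t.2.1 t.2.2).map fun p => repl X flat p.1 p.2) := by
  simp only [conjB, subst_bigAndQ, subst_topA_Tc, List.map_map, Function.comp_def,
    subst_replB]

lemma subst_CL_map (X : Finset ℕ) : ∀ (Θ : DNF) (n w : ℕ),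
    ((CL n w Θ).map (conjB X flat)).map (Fml.subst (σB a flat)) =
      (idxDNF w Θ).map fun c => bigAndQ topQ (c.map fun p => repl X flat p.1 p.2)
  | [], _, _ => rfl
  | c :: r, n, w => by
      simp only [CL, idxDNF, List.map_cons]
      rw [subst_CL_map X r (n+1) (w + c.length), subst_conjB]

lemma subst_CbB (X : Finset ℕ) (Θ : DNF) :
    (CbB X Θ).subst (σB a Θ.flatten) = consequentQ X Θ := by
  simp only [CbB, consequentQ, subst_bigOrQ, subst_botA_Kc]
  rw [subst_CL_map X Θ 0 0]

lemma subst_BB (X : Finset ℕ) (Θ : DNF) :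
    (BB a X Θ).subst (σB a Θ.flatten) = fQBF X Θ := by
  simp only [BB, fQBF]
  rcases hs : X.sort (· ≤ ·) with _ | ⟨z, zs⟩
  · simp [subst_CbB]
  · simp only [List.map_cons, Fml.subst]
    rw [Fml.subst_negate, subst_bigAndQ, subst_topQ, subst_CbB]
    simp only [List.map_cons, List.map_map, Function.comp_def, subst_gB]

end CirquentCalc

namespace CirquentCalc

variable {a : ℕ → Bool} {flat : List Lit} {X : Finset ℕ} {m z : ℕ}

@[simp] lemma atomsL_and (f g : Fml) : (Fml.and f g).atomsL = f.atomsL ++ g.atomsL := rfl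
@[simp] lemma atomsL_or (f g : Fml) : (Fml.or f g).atomsL = f.atomsL ++ g.atomsL := rfl
@[simp] lemma atomsL_pos (n : ℕ) : (Fml.pos n).atomsL = [n] := rfl
@[simp] lemma atomsL_neg (n : ℕ) : (Fml.neg n).atomsL = [n] := rfl

lemma flatten_atoms_single {α : Type*} (g : α → Fml) (f : α → ℕ)
    (h : ∀ x, (g x).atomsL = [f x]) :
    ∀ L : List α, ((L.map g).map Fml.atomsL).flatten = L.map f
  | [] => rfl
  | x :: r => by
      simp only [List.map_cons, List.flatten_cons, h x,
        flatten_atoms_single g f h r, List.cons_append, List.nil_append]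

@[simp] lemma atomsL_topA (n : ℕ) : (topA n).atomsL = [n, n] := rfl
@[simp] lemma atomsL_botA (n : ℕ) : (botA n).atomsL = [n, n] := rfl

lemma count_singleL (x m : ℕ) : ([x] : List ℕ).count m = if x = m then 1 else 0 := by
  simp [List.count_cons]

/-- Abbreviation for the atoms u₁ᶻ, …. -/
def ucs (flat : List Lit) (z : ℕ) : List ℕ :=
  (List.range (cnt flat z true)).map (fun i => uc z (i+1))
def vcs (flat : List Lit) (z : ℕ) : List ℕ :=
  (List.range (cnt flat z false)).map (fun j => vc z (j+1))

lemma atomsL_imp1 (z : ℕ) (hk : cnt flat z true ≠ 0) :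
    (imp1 flat z).atomsL = Zc z :: ucs flat z := by
  have hne : (List.range (cnt flat z true)).map (fun i => Fml.pos (uc z (i+1))) ≠ [] := by
    simp [List.range_eq_nil, hk]
  simp only [imp1, atomsL_or, atomsL_neg, atomsL_bigAndQ _ _ hne]
  rw [flatten_atoms_single (fun i => Fml.pos (uc z (i+1))) (fun i => uc z (i+1))
    (fun x => rfl)]
  rfl

lemma atomsL_imp2 (z : ℕ) (ht : cnt flat z false ≠ 0) :
    (imp2 flat z).atomsL = Zc z :: vcs flat z := by
  have hne : (List.range (cnt flat z false)).map (fun j => Fml.neg (vc z (j+1))) ≠ [] := by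
    simp [List.range_eq_nil, ht]
  simp only [imp2, atomsL_or, atomsL_neg, atomsL_bigAndQ _ _ hne]
  rw [flatten_atoms_single (fun j => Fml.neg (vc z (j+1))) (fun j => vc z (j+1))
    (fun x => rfl)]
  rfl

lemma count_range_le_one {f : ℕ → ℕ} (hf : Function.Injective f) (n m : ℕ) :
    ((List.range n).map f).count m ≤ 1 :=
  List.nodup_iff_count_le_one.1 ((List.nodup_range : (List.range n).Nodup).map hf) m

lemma count_range_eq_zero {f : ℕ → ℕ} {n m : ℕ} (h : ∀ i, f i ≠ m) :
    ((List.range n).map f).count m = 0 := by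
  rw [List.count_eq_zero]
  intro hm
  rcases List.mem_map.1 hm with ⟨i, _, hi⟩
  exact h i hi

lemma count_ucs_le_one : (ucs flat z).count m ≤ 1 := by
  apply count_range_le_one
  intro x y h
  simp only [uc] at h
  have := code_inj h
  omega

lemma count_vcs_le_one : (vcs flat z).count m ≤ 1 := by
  apply count_range_le_one
  intro x y h
  simp only [vc] at h
  have := code_inj h
  omega

lemma count_ucs_ne (h : m.unpair.1 ≠ 1) : (ucs flat z).count m = 0 :=
  count_range_eq_zero (fun i hi => h (by rw [← hi]; simp [uc]))

lemma count_vcs_ne (h : m.unpair.1 ≠ 2) : (vcs flat z).count m = 0 :=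
  count_range_eq_zero (fun j hj => h (by rw [← hj]; simp [vc]))

lemma mem_ucs (h : m ∈ ucs flat z) :
    m.unpair.1 = 1 ∧ m.unpair.2.unpair.1 = z := by
  rcases List.mem_map.1 h with ⟨i, _, rfl⟩
  simp [uc]

lemma mem_vcs (h : m ∈ vcs flat z) :
    m.unpair.1 = 2 ∧ m.unpair.2.unpair.1 = z := by
  rcases List.mem_map.1 h with ⟨j, _, rfl⟩
  simp [vc]

/-- The five shapes of the atom list of gB. -/
lemma atomsL_gB (z : ℕ) :
    (gB a flat z).atomsL = [Zc z] ∨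
    (gB a flat z).atomsL = Zc z :: Zc z :: vcs flat z ∨
    (gB a flat z).atomsL = Zc z :: Zc z :: ucs flat z ∨
    (gB a flat z).atomsL = Zc z :: ((Zc z :: ucs flat z) ++ [Cc z]) ∨
    (gB a flat z).atomsL = Zc z :: Cc z :: Zc z :: vcs flat z := by
  simp only [gB]
  by_cases hk : cnt flat z true = 0 <;> by_cases ht : cnt flat z false = 0 <;>
    simp only [hk, ht, if_pos, if_neg, reduceIte]
  · exact Or.inl rfl
  · refine Or.inr (Or.inl ?_)
    simp [atomsL_imp2 z ht]
  · refine Or.inr (Or.inr (Or.inl ?_))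
    simp [atomsL_imp1 z hk]
  · by_cases ha : a z <;> simp only [ha, if_pos, if_neg, reduceIte,
      Bool.false_eq_true, if_false]
    · refine Or.inr (Or.inr (Or.inr (Or.inl ?_)))
      simp [atomsL_imp1 z hk]
    · refine Or.inr (Or.inr (Or.inr (Or.inr ?_)))
      simp [atomsL_imp2 z ht]

lemma ZC_ne (z : ℕ) : Zc z ≠ Cc z := by
  intro h
  have := code_inj h
  omega

lemma count_gB_le (z : ℕ) : ((gB a flat z).atomsL.count m) ≤ 2 := by
  have hu := count_ucs_le_one (flat := flat) (z := z) (m := m)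
  have hv := count_vcs_le_one (flat := flat) (z := z) (m := m)
  rcases atomsL_gB (a := a) (flat := flat) z with h | h | h | h | h <;>
    rw [h] <;>
    simp only [List.count_append, List.count_cons, List.count_nil, beq_iff_eq]
  · split <;> omega
  · by_cases hZ : Zc z = m
    · subst hZ
      rw [count_vcs_ne (by simp [Zc])]
      simp
    · simp only [if_neg hZ]; omega
  · by_cases hZ : Zc z = m
    · subst hZ
      rw [count_ucs_ne (by simp [Zc])]
      simp
    · simp only [if_neg hZ]; omega
  · by_cases hZ : Zc z = m
    · subst hZ
      rw [count_ucs_ne (by simp [Zc])]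
      simp [(ZC_ne z).symm]
    · by_cases hC : Cc z = m
      · subst hC
        rw [count_ucs_ne (by simp [Cc])]
        simp [hZ]
      · simp only [if_neg hZ, if_neg hC]; omega
  · by_cases hZ : Zc z = m
    · subst hZ
      rw [count_vcs_ne (by simp [Zc])]
      simp [(ZC_ne z).symm]
    · by_cases hC : Cc z = m
      · subst hC
        rw [count_vcs_ne (by simp [Cc])]
        simp [hZ]
      · simp only [if_neg hZ, if_neg hC]; omega

lemma count_gB_le_one (z : ℕ) (h0 : m.unpair.1 ≠ 0) :
    ((gB a flat z).atomsL.count m) ≤ 1 := by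
  have hZ : ¬(Zc z = m) := by rintro rfl; simp [Zc] at h0
  have hu := count_ucs_le_one (flat := flat) (z := z) (m := m)
  have hv := count_vcs_le_one (flat := flat) (z := z) (m := m)
  rcases atomsL_gB (a := a) (flat := flat) z with h | h | h | h | h <;>
    rw [h] <;>
    simp only [List.count_append, List.count_cons, List.count_nil, beq_iff_eq,
      if_neg hZ] <;>
    try omega
  · by_cases hC : Cc z = m
    · subst hC
      rw [count_ucs_ne (by simp [Cc])]
      simp
    · simp only [if_neg hC]; omega
  · by_cases hC : Cc z = m
    · subst hC
      rw [count_vcs_ne (by simp [Cc])]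
      simp
    · simp only [if_neg hC]; omega

lemma mem_gB (h : m ∈ (gB a flat z).atomsL) :
    m.unpair.2.unpair.1 = z ∧
      (m.unpair.1 = 0 ∨ m.unpair.1 = 1 ∨ m.unpair.1 = 2 ∨ m.unpair.1 = 5) := by
  rcases atomsL_gB (a := a) (flat := flat) z with hL | hL | hL | hL | hL <;>
    rw [hL] at h <;>
    simp only [List.mem_cons, List.mem_append, List.mem_singleton,
      List.not_mem_nil, or_false, false_or] at h
  · subst h; simp [Zc]
  · rcases h with rfl | rfl | h
    · simp [Zc]
    · simp [Zc]
    · have := mem_vcs h; tauto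
  · rcases h with rfl | rfl | h
    · simp [Zc]
    · simp [Zc]
    · have := mem_ucs h; tauto
  · rcases h with rfl | (rfl | h) | rfl
    · simp [Zc]
    · simp [Zc]
    · have := mem_ucs h; tauto
    · simp [Cc]
  · rcases h with rfl | rfl | rfl | h
    · simp [Zc]
    · simp [Cc]
    · simp [Zc]
    · have := mem_vcs h; tauto

end CirquentCalc

namespace CirquentCalc

variable {a : ℕ → Bool} {flat : List Lit} {X : Finset ℕ} {m z w : ℕ} {l : Lit}

def pcsP (flat : List Lit) (w : ℕ) (l : Lit) : List ℕ :=
  (List.range (cnt flat l.1 false)).map (fun j => Pc l.1 (occIdx flat w l) (j+1))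
def pcsN (flat : List Lit) (w : ℕ) (l : Lit) : List ℕ :=
  (List.range (cnt flat l.1 true)).map (fun i' => Pc l.1 (i'+1) (occIdx flat w l))

lemma atomsL_replB_XT (hX : l.1 ∈ X) (hs : l.2 = true) :
    (replB X flat w l).atomsL = [uc l.1 (occIdx flat w l)] := by
  simp [replB, hX, hs]

lemma atomsL_replB_XF (hX : l.1 ∈ X) (hs : l.2 = false) :
    (replB X flat w l).atomsL = [vc l.1 (occIdx flat w l)] := by
  simp [replB, hX, hs]

lemma atomsL_replB_YT (hX : l.1 ∉ X) (hs : l.2 = true) (h0 : cnt flat l.1 false ≠ 0) :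
    (replB X flat w l).atomsL = pcsP flat w l := by
  have hne : (List.range (cnt flat l.1 false)).map
      (fun j => Fml.pos (Pc l.1 (occIdx flat w l) (j+1))) ≠ [] := by
    simp [List.range_eq_nil, h0]
  simp only [replB, if_neg hX, hs, if_pos, if_true, reduceIte]
  rw [atomsL_bigOrQ _ _ hne,
    flatten_atoms_single (fun j => Fml.pos (Pc l.1 (occIdx flat w l) (j+1)))
      (fun j => Pc l.1 (occIdx flat w l) (j+1)) (fun x => rfl)]
  rfl

lemma atomsL_replB_YT0 (hX : l.1 ∉ X) (hs : l.2 = true) (h0 : cnt flat l.1 false = 0) :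
    (replB X flat w l).atomsL = [Bc w, Bc w] := by
  simp [replB, hX, hs, h0, bigOrQ]

lemma atomsL_replB_YF (hX : l.1 ∉ X) (hs : l.2 = false) (h0 : cnt flat l.1 true ≠ 0) :
    (replB X flat w l).atomsL = pcsN flat w l := by
  have hne : (List.range (cnt flat l.1 true)).map
      (fun i' => Fml.neg (Pc l.1 (i'+1) (occIdx flat w l))) ≠ [] := by
    simp [List.range_eq_nil, h0]
  simp only [replB, if_neg hX, hs, Bool.false_eq_true, if_false, reduceIte]
  rw [atomsL_bigOrQ _ _ hne,
    flatten_atoms_single (fun i' => Fml.neg (Pc l.1 (i'+1) (occIdx flat w l)))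
      (fun i' => Pc l.1 (i'+1) (occIdx flat w l)) (fun x => rfl)]
  rfl

lemma atomsL_replB_YF0 (hX : l.1 ∉ X) (hs : l.2 = false) (h0 : cnt flat l.1 true = 0) :
    (replB X flat w l).atomsL = [Bc w, Bc w] := by
  simp [replB, hX, hs, h0, bigOrQ]

lemma mem_pcsP (h : m ∈ pcsP flat w l) :
    m.unpair.1 = 3 ∧ m.unpair.2.unpair.1 = l.1 ∧
      m.unpair.2.unpair.2.unpair.1 = occIdx flat w l := by
  rcases List.mem_map.1 h with ⟨j, _, rfl⟩
  simp [Pc]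

lemma mem_pcsN (h : m ∈ pcsN flat w l) :
    m.unpair.1 = 3 ∧ m.unpair.2.unpair.1 = l.1 ∧
      m.unpair.2.unpair.2.unpair.2 = occIdx flat w l := by
  rcases List.mem_map.1 h with ⟨i', _, rfl⟩
  simp [Pc]

lemma count_pcsP_le_one : (pcsP flat w l).count m ≤ 1 := by
  apply count_range_le_one
  intro x y h
  simp only [Pc] at h
  have := code_inj h
  omega

lemma count_pcsN_le_one : (pcsN flat w l).count m ≤ 1 := by
  apply count_range_le_one
  intro x y h
  simp only [Pc] at h
  have := code_inj h
  omega

/-- Case analysis on membership in the atoms of a replacement. -/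
lemma mem_replB (h : m ∈ (replB X flat w l).atomsL) :
    (m.unpair.1 = 1 ∧ l.1 ∈ X ∧ l.2 = true ∧ m = uc l.1 (occIdx flat w l)) ∨
    (m.unpair.1 = 2 ∧ l.1 ∈ X ∧ l.2 = false ∧ m = vc l.1 (occIdx flat w l)) ∨
    (m.unpair.1 = 3 ∧ l.1 ∉ X ∧ m.unpair.2.unpair.1 = l.1 ∧
      ((l.2 = true ∧ m.unpair.2.unpair.2.unpair.1 = occIdx flat w l) ∨
       (l.2 = false ∧ m.unpair.2.unpair.2.unpair.2 = occIdx flat w l))) ∨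
    (m.unpair.1 = 7 ∧ m = Bc w) := by
  by_cases hX : l.1 ∈ X <;> cases hs : l.2
  · rw [atomsL_replB_XF hX hs] at h
    simp only [List.mem_singleton] at h
    exact Or.inr (Or.inl ⟨by rw [h]; simp [vc], hX, rfl, h⟩)
  · rw [atomsL_replB_XT hX hs] at h
    simp only [List.mem_singleton] at h
    exact Or.inl ⟨by rw [h]; simp [uc], hX, rfl, h⟩

  · by_cases h0 : cnt flat l.1 true = 0
    · rw [atomsL_replB_YF0 hX hs h0] at h
      simp only [List.mem_cons, List.not_mem_nil, or_false] at h
      rcases h with rfl | rfl <;> exact Or.inr (Or.inr (Or.inr ⟨by simp [Bc], rfl⟩))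
    · rw [atomsL_replB_YF hX hs h0] at h
      have := mem_pcsN h
      exact Or.inr (Or.inr (Or.inl ⟨this.1, hX, this.2.1, Or.inr ⟨rfl, this.2.2⟩⟩))
  · by_cases h0 : cnt flat l.1 false = 0
    · rw [atomsL_replB_YT0 hX hs h0] at h
      simp only [List.mem_cons, List.not_mem_nil, or_false] at h
      rcases h with rfl | rfl <;> exact Or.inr (Or.inr (Or.inr ⟨by simp [Bc], rfl⟩))
    · rw [atomsL_replB_YT hX hs h0] at h
      have := mem_pcsP h
      exact Or.inr (Or.inr (Or.inl ⟨this.1, hX, this.2.1, Or.inl ⟨rfl, this.2.2⟩⟩))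
lemma count_replB_le_two : ((replB X flat w l).atomsL.count m) ≤ 2 := by
  by_cases hX : l.1 ∈ X <;> cases hs : l.2
  · rw [atomsL_replB_XF hX hs]; simp [count_singleL]; split <;> omega
  · rw [atomsL_replB_XT hX hs]; simp [count_singleL]; split <;> omega

  · by_cases h0 : cnt flat l.1 true = 0
    · rw [atomsL_replB_YF0 hX hs h0]; simp [List.count_cons]; split <;> omega
    · rw [atomsL_replB_YF hX hs h0]
      have := count_pcsN_le_one (flat := flat) (w := w) (l := l) (m := m)
      omega
  · by_cases h0 : cnt flat l.1 false = 0
    · rw [atomsL_replB_YT0 hX hs h0]; simp [List.count_cons]; split <;> omega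
    · rw [atomsL_replB_YT hX hs h0]
      have := count_pcsP_le_one (flat := flat) (w := w) (l := l) (m := m)
      omega
lemma count_replB_le_one (h7 : m.unpair.1 ≠ 7) :
    ((replB X flat w l).atomsL.count m) ≤ 1 := by
  by_cases hX : l.1 ∈ X <;> cases hs : l.2
  · rw [atomsL_replB_XF hX hs]; simp [count_singleL]; split <;> omega
  · rw [atomsL_replB_XT hX hs]; simp [count_singleL]; split <;> omega
  · by_cases h0 : cnt flat l.1 true = 0
    · rw [atomsL_replB_YF0 hX hs h0]
      have : ¬(Bc w = m) := by rintro rfl; simp [Bc] at h7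
      simp [List.count_cons, this]
    · rw [atomsL_replB_YF hX hs h0]
      exact count_pcsN_le_one
  · by_cases h0 : cnt flat l.1 false = 0
    · rw [atomsL_replB_YT0 hX hs h0]
      have : ¬(Bc w = m) := by rintro rfl; simp [Bc] at h7
      simp [List.count_cons, this]
    · rw [atomsL_replB_YT hX hs h0]
      exact count_pcsP_le_one

end CirquentCalc

namespace CirquentCalc

variable {a : ℕ → Bool} {flat : List Lit} {X : Finset ℕ} {m z w : ℕ} {l : Lit}

lemma sum_map_add {α : Type*} (L : List α) (f g : α → ℕ) :
    (L.map fun x => f x + g x).sum = (L.map f).sum + (L.map g).sum := by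
  induction L with
  | nil => simp
  | cons x r ih => simp [ih]; omega

/-- All atoms of the consequent entries. -/
def EAtoms (X : Finset ℕ) (flat : List Lit) : List ℕ :=
  ((idxConj 0 flat).map (fun p => (replB X flat p.1 p.2).atomsL)).flatten

lemma count_EAtoms_sum :
    (EAtoms X flat).count m =
      ((idxConj 0 flat).map (fun p => (replB X flat p.1 p.2).atomsL.count m)).sum := by
  rw [EAtoms, count_flatten, List.map_map]
  rfl

lemma count_EAtoms_le_one_tag1 (h1 : m.unpair.1 = 1) : (EAtoms X flat).count m ≤ 1 := by
  rw [count_EAtoms_sum]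
  apply sum_count_le 1 _ _ (fun p _ => count_replB_le_one (by omega)) _ (nodup_idxConj 0 flat)
  intro p hp q hq hfp hfq
  replace hfp := List.count_pos_iff.1 (Nat.pos_of_ne_zero hfp)
  replace hfq := List.count_pos_iff.1 (Nat.pos_of_ne_zero hfq)
  rcases mem_replB hfp with ⟨_, hpX, hps, hpm⟩ | ⟨h2, _⟩ | ⟨h3, _⟩ | ⟨h7, _⟩ <;>
    try omega
  rcases mem_replB hfq with ⟨_, hqX, hqs, hqm⟩ | ⟨h2, _⟩ | ⟨h3, _⟩ | ⟨h7, _⟩ <;>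
    try omega
  rw [hpm] at hqm
  simp only [uc] at hqm
  have hinj := code_inj hqm
  have hsnd : p.2 = q.2 := Prod.ext hinj.2.1 (by rw [hps, hqs])
  have hfst : p.1 = q.1 := by
    apply occIdx_inj (getElem?_of_mem_idxConj hp)
      (by rw [hsnd]; exact getElem?_of_mem_idxConj hq)
    have := hinj.2.2.1
    rw [hsnd] at this ⊢
    exact this
  exact Prod.ext hfst hsnd

lemma count_EAtoms_le_one_tag2 (h2 : m.unpair.1 = 2) : (EAtoms X flat).count m ≤ 1 := by
  rw [count_EAtoms_sum]
  apply sum_count_le 1 _ _ (fun p _ => count_replB_le_one (by omega)) _ (nodup_idxConj 0 flat)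
  intro p hp q hq hfp hfq
  replace hfp := List.count_pos_iff.1 (Nat.pos_of_ne_zero hfp)
  replace hfq := List.count_pos_iff.1 (Nat.pos_of_ne_zero hfq)
  rcases mem_replB hfp with ⟨h1, _⟩ | ⟨_, hpX, hps, hpm⟩ | ⟨h3, _⟩ | ⟨h7, _⟩ <;>
    try omega
  rcases mem_replB hfq with ⟨h1, _⟩ | ⟨_, hqX, hqs, hqm⟩ | ⟨h3, _⟩ | ⟨h7, _⟩ <;>
    try omega
  rw [hpm] at hqm
  simp only [vc] at hqm
  have hinj := code_inj hqm
  have hsnd : p.2 = q.2 := Prod.ext hinj.2.1 (by rw [hps, hqs])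
  have hfst : p.1 = q.1 := by
    apply occIdx_inj (getElem?_of_mem_idxConj hp)
      (by rw [hsnd]; exact getElem?_of_mem_idxConj hq)
    have := hinj.2.2.1
    rw [hsnd] at this ⊢
    exact this
  exact Prod.ext hfst hsnd

lemma count_EAtoms_le_two_tag3 (h3 : m.unpair.1 = 3) : (EAtoms X flat).count m ≤ 2 := by
  rw [count_EAtoms_sum]
  have hfe : (fun p : ℕ × Lit => (replB X flat p.1 p.2).atomsL.count m) =
      fun p => (if p.2.2 = true then (replB X flat p.1 p.2).atomsL.count m else 0) +
        (if p.2.2 = true then 0 else (replB X flat p.1 p.2).atomsL.count m) := by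
    funext p
    by_cases h : p.2.2 = true <;> simp [h]
  rw [hfe, sum_map_add]
  have hA : ((idxConj 0 flat).map
      (fun p => if p.2.2 = true then (replB X flat p.1 p.2).atomsL.count m else 0)).sum ≤ 1 := by
    apply sum_count_le 1 _ _ ?_ ?_ (nodup_idxConj 0 flat)
    · intro p _
      split
      · exact count_replB_le_one (by omega)
      · omega
    · intro p hp q hq hfp hfq
      rw [ne_eq, ite_eq_right_iff, not_forall] at hfp hfq
      rcases hfp with ⟨hps, hfp⟩
      rcases hfq with ⟨hqs, hfq⟩
      replace hfp := List.count_pos_iff.1 (Nat.pos_of_ne_zero hfp)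
      replace hfq := List.count_pos_iff.1 (Nat.pos_of_ne_zero hfq)
      rcases mem_replB hfp with ⟨h1, _⟩ | ⟨h2, _⟩ | ⟨_, hpX, hpz, hpi⟩ | ⟨h7, _⟩ <;>
        try omega
      rcases mem_replB hfq with ⟨h1, _⟩ | ⟨h2, _⟩ | ⟨_, hqX, hqz, hqi⟩ | ⟨h7, _⟩ <;>
        try omega
      rcases hpi with ⟨_, hpi⟩ | ⟨hpf, _⟩
      swap
      · rw [hpf] at hps; simp at hps
      rcases hqi with ⟨_, hqi⟩ | ⟨hqf, _⟩
      swap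
      · rw [hqf] at hqs; simp at hqs
      have hsnd : p.2 = q.2 := Prod.ext (by rw [← hpz, ← hqz]) (by rw [hps, hqs])
      have hfst : p.1 = q.1 := by
        apply occIdx_inj (getElem?_of_mem_idxConj hp)
          (by rw [hsnd]; exact getElem?_of_mem_idxConj hq)
        rw [← hpi, hsnd, ← hqi]
      exact Prod.ext hfst hsnd
  have hB : ((idxConj 0 flat).map
      (fun p => if p.2.2 = true then 0 else (replB X flat p.1 p.2).atomsL.count m)).sum ≤ 1 := by
    apply sum_count_le 1 _ _ ?_ ?_ (nodup_idxConj 0 flat)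
    · intro p _
      split
      · omega
      · exact count_replB_le_one (by omega)
    · intro p hp q hq hfp hfq
      by_cases hps : p.2.2 = true
      · simp [hps] at hfp
      by_cases hqs : q.2.2 = true
      · simp [hqs] at hfq
      rw [if_neg hps] at hfp
      rw [if_neg hqs] at hfq
      replace hfp := List.count_pos_iff.1 (Nat.pos_of_ne_zero hfp)
      replace hfq := List.count_pos_iff.1 (Nat.pos_of_ne_zero hfq)
      rcases mem_replB hfp with ⟨h1, _⟩ | ⟨h2, _⟩ | ⟨_, hpX, hpz, hpi⟩ | ⟨h7, _⟩ <;>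
        try omega
      rcases mem_replB hfq with ⟨h1, _⟩ | ⟨h2, _⟩ | ⟨_, hqX, hqz, hqi⟩ | ⟨h7, _⟩ <;>
        try omega
      rcases hpi with ⟨hpt, _⟩ | ⟨hpf, hpi⟩
      · exact absurd hpt hps
      rcases hqi with ⟨hqt, _⟩ | ⟨hqf, hqi⟩
      · exact absurd hqt hqs
      have hsnd : p.2 = q.2 := Prod.ext (by rw [← hpz, ← hqz]) (by rw [hpf, hqf])
      have hfst : p.1 = q.1 := by
        apply occIdx_inj (getElem?_of_mem_idxConj hp)
          (by rw [hsnd]; exact getElem?_of_mem_idxConj hq)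
        rw [← hpi, hsnd, ← hqi]
      exact Prod.ext hfst hsnd
  omega

lemma count_EAtoms_le_two_tag7 (h7 : m.unpair.1 = 7) : (EAtoms X flat).count m ≤ 2 := by
  rw [count_EAtoms_sum]
  apply sum_count_le 2 _ _ (fun p _ => count_replB_le_two) _ (nodup_idxConj 0 flat)
  intro p hp q hq hfp hfq
  replace hfp := List.count_pos_iff.1 (Nat.pos_of_ne_zero hfp)
  replace hfq := List.count_pos_iff.1 (Nat.pos_of_ne_zero hfq)
  rcases mem_replB hfp with ⟨h1, _⟩ | ⟨h2, _⟩ | ⟨h3, _⟩ | ⟨_, hpm⟩ <;> try omega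
  rcases mem_replB hfq with ⟨h1, _⟩ | ⟨h2, _⟩ | ⟨h3, _⟩ | ⟨_, hqm⟩ <;> try omega
  rw [hpm] at hqm
  simp only [Bc] at hqm
  have hinj := code_inj hqm
  exact idxConj_fst_inj hp hq hinj.2.1

lemma count_EAtoms_zero
    (h : m.unpair.1 ≠ 1 ∧ m.unpair.1 ≠ 2 ∧ m.unpair.1 ≠ 3 ∧ m.unpair.1 ≠ 7) :
    (EAtoms X flat).count m = 0 := by
  rw [List.count_eq_zero]
  intro hm
  rcases List.mem_flatten.1 hm with ⟨L, hL, hmL⟩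
  rcases List.mem_map.1 hL with ⟨p, _, rfl⟩
  rcases mem_replB hmL with ⟨h1, _⟩ | ⟨h2, _⟩ | ⟨h3, _⟩ | ⟨h7, _⟩ <;> omega

lemma count_EAtoms_le_two : (EAtoms X flat).count m ≤ 2 := by
  by_cases h1 : m.unpair.1 = 1
  · have := count_EAtoms_le_one_tag1 (X := X) (flat := flat) h1; omega
  by_cases h2 : m.unpair.1 = 2
  · have := count_EAtoms_le_one_tag2 (X := X) (flat := flat) h2; omega
  by_cases h3 : m.unpair.1 = 3
  · exact count_EAtoms_le_two_tag3 h3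
  by_cases h7 : m.unpair.1 = 7
  · exact count_EAtoms_le_two_tag7 h7
  rw [count_EAtoms_zero ⟨h1, h2, h3, h7⟩]
  omega

end CirquentCalc

namespace CirquentCalc

variable {a : ℕ → Bool} {flat : List Lit} {X : Finset ℕ} {m z w : ℕ} {l : Lit}

lemma atomsL_conjB (t : ℕ × ℕ × List Lit) :
    (conjB X flat t).atomsL =
      if t.2.2 = [] then [Tc t.1, Tc t.1]
      else ((idxConj t.2.1 t.2.2).map (fun p => (replB X flat p.1 p.2).atomsL)).flatten := by
  rcases t with ⟨n, w, c⟩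
  cases c with
  | nil => simp [conjB, idxConj, bigAndQ]
  | cons x r =>
      have hne : (idxConj w (x :: r)).map (fun p => replB X flat p.1 p.2) ≠ [] := by
        simp [idxConj]
      simp only [conjB, atomsL_bigAndQ _ _ hne, List.map_map]
      simp [Function.comp_def]

lemma count_CL_conj (h6 : m.unpair.1 ≠ 6) : ∀ (Θ' : DNF) (n w : ℕ),
    (((CL n w Θ').map (fun t => (conjB X flat t).atomsL)).flatten).count m =
      (((idxConj w Θ'.flatten).map (fun p => (replB X flat p.1 p.2).atomsL)).flatten).count m
  | [], _, _ => rfl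
  | c :: r, n, w => by
      have hflat : (c :: r).flatten = c ++ r.flatten := rfl
      rw [hflat, idxConj_append, List.map_append, List.flatten_append, List.count_append]
      simp only [CL, List.map_cons, List.flatten_cons, List.count_append]
      rw [count_CL_conj h6 r (n+1) (w + c.length)]
      congr 1
      rw [atomsL_conjB]
      split
      · next hc =>
          simp only at hc
          subst hc
          simp only [idxConj, List.map_nil, List.flatten_nil, List.count_nil]
          rw [List.count_eq_zero]
          intro hm
          simp only [List.mem_cons, List.not_mem_nil, or_false] at hm
          rcases hm with rfl | rfl <;> simp [Tc] at h6
      · rfl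

lemma mem_CL_atoms_tag6 (h6 : m.unpair.1 = 6) : ∀ (Θ' : DNF) (n w : ℕ),
    m ∈ ((CL n w Θ').map (fun t => (conjB X flat t).atomsL)).flatten →
      n ≤ m.unpair.2.unpair.1
  | [], n, w => by simp [CL]
  | c :: r, n, w => by
      intro hm
      simp only [CL, List.map_cons, List.flatten_cons, List.mem_append] at hm
      rcases hm with hm | hm
      · rw [atomsL_conjB] at hm
        split at hm
        · simp only [List.mem_cons, List.not_mem_nil, or_false] at hm
          rcases hm with rfl | rfl <;> simp [Tc]
        · rcases List.mem_flatten.1 hm with ⟨L, hL, hmL⟩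
          rcases List.mem_map.1 hL with ⟨p, _, rfl⟩
          rcases mem_replB hmL with ⟨h1, _⟩ | ⟨h2, _⟩ | ⟨h3, _⟩ | ⟨h7, _⟩ <;> omega
      · have := mem_CL_atoms_tag6 h6 r (n+1) (w + c.length) hm
        omega

lemma count_CL_tag6 (h6 : m.unpair.1 = 6) : ∀ (Θ' : DNF) (n w : ℕ),
    (((CL n w Θ').map (fun t => (conjB X flat t).atomsL)).flatten).count m ≤ 2
  | [], _, _ => by simp [CL]
  | c :: r, n, w => by
      simp only [CL, List.map_cons, List.flatten_cons, List.count_append]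
      have htail := count_CL_tag6 h6 r (n+1) (w + c.length)
      rw [atomsL_conjB]
      split
      · by_cases hT : m = Tc n
        · have hz : (((CL (n+1) (w + c.length) r).map
              (fun t => (conjB X flat t).atomsL)).flatten).count m = 0 := by
            rw [List.count_eq_zero]
            intro hm
            have := mem_CL_atoms_tag6 h6 r (n+1) (w + c.length) hm
            rw [hT] at this
            simp [Tc] at this
          rw [hz]
          simp [List.count_cons, hT]
        · have hTc : ¬((Tc n : ℕ) = m) := fun h => hT h.symm
          have hcnt : ([Tc n, Tc n] : List ℕ).count m = 0 := by
            simp [List.count_cons, hTc]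
          rw [hcnt]
          simpa using htail
      · have : ((((idxConj w c).map (fun p => (replB X flat p.1 p.2).atomsL)).flatten).count m) = 0 := by
          rw [List.count_eq_zero]
          intro hm
          rcases List.mem_flatten.1 hm with ⟨L, hL, hmL⟩
          rcases List.mem_map.1 hL with ⟨p, _, rfl⟩
          rcases mem_replB hmL with ⟨h1, _⟩ | ⟨h2, _⟩ | ⟨h3, _⟩ | ⟨h7, _⟩ <;> omega
        rw [this]
        simpa using htail

/- antecedent atoms -/
lemma count_Ab_le :
    ((((X.sort (· ≤ ·)).map (fun z => (gB a flat z).atomsL)).flatten).count m) ≤ 2 := by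
  rw [count_flatten, List.map_map]
  apply sum_count_le 2 _ _ (fun z _ => count_gB_le z) _ (X.sort_nodup (· ≤ ·))
  intro p hp q hq hfp hfq
  replace hfp := List.count_pos_iff.1 (Nat.pos_of_ne_zero hfp)
  replace hfq := List.count_pos_iff.1 (Nat.pos_of_ne_zero hfq)
  have h1 := (mem_gB hfp).1
  have h2 := (mem_gB hfq).1
  omega

lemma count_Ab_le_one (h0 : m.unpair.1 ≠ 0) :
    ((((X.sort (· ≤ ·)).map (fun z => (gB a flat z).atomsL)).flatten).count m) ≤ 1 := by
  rw [count_flatten, List.map_map]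
  apply sum_count_le 1 _ _ (fun z _ => count_gB_le_one z h0) _ (X.sort_nodup (· ≤ ·))
  intro p hp q hq hfp hfq
  replace hfp := List.count_pos_iff.1 (Nat.pos_of_ne_zero hfp)
  replace hfq := List.count_pos_iff.1 (Nat.pos_of_ne_zero hfq)
  have h1 := (mem_gB hfp).1
  have h2 := (mem_gB hfq).1
  omega

lemma count_Ab_zero
    (h : m.unpair.1 ≠ 0 ∧ m.unpair.1 ≠ 1 ∧ m.unpair.1 ≠ 2 ∧ m.unpair.1 ≠ 5) :
    ((((X.sort (· ≤ ·)).map (fun z => (gB a flat z).atomsL)).flatten).count m) = 0 := by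
  rw [List.count_eq_zero]
  intro hm
  rcases List.mem_flatten.1 hm with ⟨L, hL, hmL⟩
  rcases List.mem_map.1 hL with ⟨z, _, rfl⟩
  have := (mem_gB hmL).2
  omega

lemma binary_BB (X : Finset ℕ) (Θ : DNF) (hΘ : Θ ≠ []) : Binary (BB a X Θ) := by
  apply binary_of_count
  intro m
  have hCLne : (CL 0 0 Θ).map (conjB X Θ.flatten) ≠ [] := by
    cases Θ with
    | nil => exact absurd rfl hΘ
    | cons c r => simp [CL]
  have hCb : (CbB X Θ).atomsL =
      ((CL 0 0 Θ).map (fun t => (conjB X Θ.flatten t).atomsL)).flatten := by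
    rw [CbB, atomsL_bigOrQ _ _ hCLne, List.map_map]
    rfl
  have hcb2 : (CbB X Θ).atomsL.count m ≤ 2 := by
    rw [hCb]
    by_cases h6 : m.unpair.1 = 6
    · exact count_CL_tag6 h6 Θ 0 0
    · rw [count_CL_conj h6 Θ 0 0]
      exact count_EAtoms_le_two
  have hcb1 : m.unpair.1 = 1 ∨ m.unpair.1 = 2 → (CbB X Θ).atomsL.count m ≤ 1 := by
    intro h12
    rw [hCb, count_CL_conj (by omega) Θ 0 0]
    rcases h12 with h | h
    · exact count_EAtoms_le_one_tag1 h
    · exact count_EAtoms_le_one_tag2 h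
  have hcb0 : m.unpair.1 = 0 ∨ m.unpair.1 = 5 → (CbB X Θ).atomsL.count m = 0 := by
    intro h
    rw [hCb, count_CL_conj (by omega) Θ 0 0]
    exact count_EAtoms_zero (by omega)
  cases hs : (X.sort (· ≤ ·)).map (gB a Θ.flatten) with
  | nil =>
      have hB : BB a X Θ = CbB X Θ := by unfold BB; rw [hs]
      rw [hB]
      exact hcb2
  | cons g gs =>
      have hB : BB a X Θ = Fml.or (Fml.negate (bigAndQ topQ (g :: gs))) (CbB X Θ) := by
        unfold BB; rw [hs]
      rw [hB]
      have hA : (bigAndQ topQ (g :: gs)).atomsL =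
          (((X.sort (· ≤ ·)).map (fun z => (gB a Θ.flatten z).atomsL)).flatten) := by
        rw [atomsL_bigAndQ _ _ (by simp), ← hs, List.map_map]
        rfl
      simp only [atomsL_or, Fml.atomsL_negate, List.count_append, hA]
      by_cases h0 : m.unpair.1 = 0
      · have := count_Ab_le (a := a) (flat := Θ.flatten) (X := X) (m := m)
        have := hcb0 (Or.inl h0)
        omega
      by_cases h1 : m.unpair.1 = 1
      · have := count_Ab_le_one (a := a) (flat := Θ.flatten) (X := X) (m := m) (by omega)
        have := hcb1 (Or.inl h1)
        omega
      by_cases h2 : m.unpair.1 = 2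
      · have := count_Ab_le_one (a := a) (flat := Θ.flatten) (X := X) (m := m) (by omega)
        have := hcb1 (Or.inr h2)
        omega
      by_cases h5 : m.unpair.1 = 5
      · have := count_Ab_le_one (a := a) (flat := Θ.flatten) (X := X) (m := m) (by omega)
        have := hcb0 (Or.inr h5)
        omega
      · have := count_Ab_zero (a := a) (flat := Θ.flatten) (X := X) (m := m) ⟨h0, h1, h2, h5⟩
        omega

end CirquentCalc

namespace CirquentCalc

variable {a : ℕ → Bool} {flat : List Lit} {X : Finset ℕ} {m z w : ℕ} {l : Lit}
  {v : ℕ → Bool}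

lemma eval_topA (n : ℕ) : (topA n).eval v = true := by
  simp [topA, Fml.eval]

lemma lt_of_getElem?_eq_some {α : Type*} {L : List α} {w : ℕ} {x : α}
    (h : L[w]? = some x) : w < L.length := by
  by_contra hc
  rw [List.getElem?_eq_none (by omega)] at h
  cases h

lemma gB_forces_u (hg : (gB a flat z).eval v = true) (ha : a z = true) :
    ∀ i, i < cnt flat z true → v (uc z (i+1)) = true := by
  intro i hi
  have hk : cnt flat z true ≠ 0 := by omega
  have himp : v (Zc z) = true ∧ (imp1 flat z).eval v = true := by
    simp only [gB, if_neg hk] at hg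
    by_cases ht : cnt flat z false = 0 <;>
      simp only [ht, if_pos, if_neg, reduceIte, ha, if_true] at hg <;>
    · simp only [Fml.eval, Bool.and_eq_true] at hg
      tauto
  obtain ⟨hZ, h1⟩ := himp
  simp only [imp1, Fml.eval, hZ, Bool.not_true, Bool.false_or] at h1
  have hne : (List.range (cnt flat z true)).map (fun i => Fml.pos (uc z (i+1))) ≠ [] := by
    simp [List.range_eq_nil, hk]
  rw [eval_bigAndQ _ _ _ hne] at h1
  have := h1 (Fml.pos (uc z (i+1))) (List.mem_map_of_mem (List.mem_range.2 hi))
  simpa [Fml.eval] using this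

lemma gB_forces_v (hg : (gB a flat z).eval v = true) (ha : a z = false) :
    ∀ j, j < cnt flat z false → v (vc z (j+1)) = false := by
  intro j hj
  have ht : cnt flat z false ≠ 0 := by omega
  have himp : v (Zc z) = true ∧ (imp2 flat z).eval v = true := by
    simp only [gB] at hg
    by_cases hk : cnt flat z true = 0 <;>
      simp only [hk, ht, if_pos, if_neg, reduceIte, ha, Bool.false_eq_true, if_false] at hg <;>
    · simp only [Fml.eval, Bool.and_eq_true] at hg
      tauto
  obtain ⟨hZ, h2⟩ := himp
  simp only [imp2, Fml.eval, hZ, Bool.not_true, Bool.false_or] at h2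
  have hne : (List.range (cnt flat z false)).map (fun j => Fml.neg (vc z (j+1))) ≠ [] := by
    simp [List.range_eq_nil, ht]
  rw [eval_bigAndQ _ _ _ hne] at h2
  have := h2 (Fml.neg (vc z (j+1))) (List.mem_map_of_mem (List.mem_range.2 hj))
  simp only [Fml.eval, Bool.not_eq_true'] at this
  exact this

lemma eval_replB_true {b : ℕ → Bool}
    (hbX : ∀ x ∈ X, b x = a x)
    (hforce1 : ∀ z ∈ X, a z = true → ∀ i, i < cnt flat z true → v (uc z (i+1)) = true)
    (hforce2 : ∀ z ∈ X, a z = false → ∀ j, j < cnt flat z false → v (vc z (j+1)) = false)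
    (hbY : ∀ y, y ∉ X → b y = true → ∀ w', w' < flat.length →
      flat[w']? = some (y, true) → (replB X flat w' (y, true)).eval v = true)
    (hbY' : ∀ y, y ∉ X → b y = false → ∃ w', w' < flat.length ∧
      flat[w']? = some (y, true) ∧ ¬((replB X flat w' (y, true)).eval v = true))
    (hw : flat[w]? = some l) (hlit : evalLit b l = true) :
    (replB X flat w l).eval v = true := by
  have hcntlt := cnt_take_lt hw
  by_cases hX : l.1 ∈ X <;> cases hs : l.2
  · -- l.1 ∈ X, negative literal
    have hb : b l.1 = false := by
      simp only [evalLit, hs, Bool.false_eq_true, if_false, Bool.not_eq_true'] at hlit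
      exact hlit
    have ha' : a l.1 = false := by rw [← hbX l.1 hX]; exact hb
    have : replB X flat w l = Fml.neg (vc l.1 (occIdx flat w l)) := by
      simp [replB, hX, hs]
    rw [this]
    simp only [Fml.eval, Bool.not_eq_true']
    rw [hs] at hcntlt
    simp only [occIdx, hs]
    exact hforce2 l.1 hX ha' (cnt (flat.take w) l.1 false) hcntlt
  · -- l.1 ∈ X, positive literal
    have hb : b l.1 = true := by simpa [evalLit, hs] using hlit
    have ha' : a l.1 = true := by rw [← hbX l.1 hX]; exact hb
    have : replB X flat w l = Fml.pos (uc l.1 (occIdx flat w l)) := by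
      simp [replB, hX, hs]
    rw [this]
    simp only [Fml.eval]
    rw [hs] at hcntlt
    simp only [occIdx, hs]
    exact hforce1 l.1 hX ha' (cnt (flat.take w) l.1 true) hcntlt
  · -- l.1 ∉ X, negative literal
    have hb : b l.1 = false := by
      simp only [evalLit, hs, Bool.false_eq_true, if_false, Bool.not_eq_true'] at hlit
      exact hlit
    obtain ⟨w0, hw0len, hw0, hev⟩ := hbY' l.1 hX hb
    have hr : cnt flat l.1 true ≠ 0 := by
      have := cnt_take_lt (l := (l.1, true)) hw0
      simp only at this
      omega
    have hs0 : cnt flat l.1 false ≠ 0 := by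
      rw [hs] at hcntlt
      omega
    have hrepl0 : replB X flat w0 (l.1, true) =
        bigOrQ (botA (Bc w0)) ((List.range (cnt flat l.1 false)).map
          fun j => Fml.pos (Pc l.1 (occIdx flat w0 (l.1, true)) (j+1))) := by
      simp [replB, hX]
    rw [hrepl0] at hev
    have hPfalse : ∀ j, j < cnt flat l.1 false →
        v (Pc l.1 (occIdx flat w0 (l.1, true)) (j+1)) = false := by
      intro j hj
      by_contra hc
      apply hev
      rw [eval_bigOrQ _ _ _ (by simp [List.range_eq_nil, hs0])]
      refine ⟨_, List.mem_map_of_mem (List.mem_range.2 hj), ?_⟩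
      simp only [Fml.eval]
      cases hvb : v (Pc l.1 (occIdx flat w0 (l.1, true)) (j+1))
      · exact absurd hvb hc
      · rfl
    have hgoal : replB X flat w l =
        bigOrQ (botA (Bc w)) ((List.range (cnt flat l.1 true)).map
          fun i' => Fml.neg (Pc l.1 (i'+1) (occIdx flat w l))) := by
      simp [replB, hX, hs]
    rw [hgoal, eval_bigOrQ _ _ _ (by simp [List.range_eq_nil, hr])]
    have hocc0 : occIdx flat w0 (l.1, true) = cnt (flat.take w0) l.1 true + 1 := by
      simp only [occIdx]
    have hi0 : cnt (flat.take w0) l.1 true < cnt flat l.1 true := by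
      have := cnt_take_lt (l := (l.1, true)) hw0
      simpa using this
    refine ⟨Fml.neg (Pc l.1 (cnt (flat.take w0) l.1 true + 1) (occIdx flat w l)),
      List.mem_map_of_mem (List.mem_range.2 hi0), ?_⟩
    simp only [Fml.eval, Bool.not_eq_true']
    have hj0 : occIdx flat w l = cnt (flat.take w) l.1 false + 1 := by
      simp only [occIdx, hs]
    rw [hj0, ← hocc0]
    apply hPfalse
    rw [hs] at hcntlt
    exact hcntlt
  · -- l.1 ∉ X, positive literal
    have hb : b l.1 = true := by simpa [evalLit, hs] using hlit
    have hl : (l.1, true) = l := by rw [← hs]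
    rw [← hl]
    apply hbY l.1 hX hb w (lt_of_getElem?_eq_some hw)
    rw [hl]
    exact hw

end CirquentCalc

namespace CirquentCalc

variable {a : ℕ → Bool} {X : Finset ℕ} {Θ : DNF} {v : ℕ → Bool}

lemma eval_CbB
    (hforce1 : ∀ z ∈ X, a z = true →
      ∀ i, i < cnt Θ.flatten z true → v (uc z (i+1)) = true)
    (hforce2 : ∀ z ∈ X, a z = false →
      ∀ j, j < cnt Θ.flatten z false → v (vc z (j+1)) = false)
    (hQ : ∀ b : ℕ → Bool, (∀ x ∈ X, b x = a x) → evalDNF b Θ = true) :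
    (CbB X Θ).eval v = true := by
  classical
  set flat := Θ.flatten with hflat
  let b : ℕ → Bool := fun n =>
    if n ∈ X then a n
    else decide (∀ w, w < flat.length → flat[w]? = some (n, true) →
      (replB X flat w (n, true)).eval v = true)
  have hbX : ∀ x ∈ X, b x = a x := fun x hx => by simp [b, hx]
  have hbY : ∀ y, y ∉ X → b y = true → ∀ w', w' < flat.length →
      flat[w']? = some (y, true) → (replB X flat w' (y, true)).eval v = true := by
    intro y hy hby
    simp only [b, if_neg hy, decide_eq_true_eq] at hby
    exact hby
  have hbY' : ∀ y, y ∉ X → b y = false → ∃ w', w' < flat.length ∧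
      flat[w']? = some (y, true) ∧ ¬((replB X flat w' (y, true)).eval v = true) := by
    intro y hy hby
    simp only [b, if_neg hy, decide_eq_false_iff_not] at hby
    push_neg at hby
    obtain ⟨w', hw1, hw2, hw3⟩ := hby
    exact ⟨w', hw1, hw2, hw3⟩
  have hDNF := hQ b hbX
  rw [evalDNF, List.any_eq_true] at hDNF
  obtain ⟨c, hc, hcall⟩ := hDNF
  rw [List.all_eq_true] at hcall
  obtain ⟨t, htCL, htc⟩ := exists_CL_of_mem (n := 0) (w := 0) hc
  have hconj : (conjB X flat t).eval v = true := by
    rcases t with ⟨n, w0, c'⟩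
    simp only at htc
    subst htc
    cases hc' : c' with
    | nil =>
        subst hc'
        simp only [conjB, idxConj, List.map_nil, bigAndQ]
        exact eval_topA _
    | cons x cr =>
        subst hc'
        have hne : (idxConj w0 (x :: cr)).map (fun p => replB X flat p.1 p.2) ≠ [] := by
          simp [idxConj]
        simp only [conjB]
        rw [eval_bigAndQ _ _ _ hne]
        intro F hF
        rcases List.mem_map.1 hF with ⟨p, hp, rfl⟩
        have hwp : flat[p.1]? = some p.2 :=
          getElem?_of_mem_idxConj (mem_CL_entry htCL hp)
        have hlit : evalLit b p.2 = true := hcall p.2 (snd_mem_of_mem_idxConj hp)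
        exact eval_replB_true hbX hforce1 hforce2 hbY hbY' hwp hlit
  have hCLne : (CL 0 0 Θ).map (conjB X flat) ≠ [] :=
    List.ne_nil_of_mem (List.mem_map_of_mem htCL)
  rw [CbB, eval_bigOrQ _ _ _ hCLne]
  exact ⟨conjB X flat t, List.mem_map_of_mem htCL, hconj⟩

lemma taut_BB (hQ : ∀ b : ℕ → Bool, (∀ x ∈ X, b x = a x) → evalDNF b Θ = true) :
    Tautology (BB a X Θ) := by
  intro v
  cases hs : (X.sort (· ≤ ·)).map (gB a Θ.flatten) with
  | nil =>
      have hB : BB a X Θ = CbB X Θ := by unfold BB; rw [hs]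
      rw [hB]
      have hX : X.sort (· ≤ ·) = [] := List.map_eq_nil_iff.1 hs
      have hXe : ∀ z, z ∉ X := by
        intro z hz
        have := (Finset.mem_sort (α := ℕ) (· ≤ ·)).2 hz
        rw [hX] at this
        exact List.not_mem_nil this
      exact eval_CbB (fun z hz => absurd hz (hXe z)) (fun z hz => absurd hz (hXe z)) hQ
  | cons g gs =>
      have hB : BB a X Θ = Fml.or (Fml.negate (bigAndQ topQ (g :: gs))) (CbB X Θ) := by
        unfold BB; rw [hs]
      rw [hB]
      simp only [Fml.eval, Fml.eval_negate]
      by_cases hA : (bigAndQ topQ (g :: gs)).eval v = true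
      · have hall : ∀ z ∈ X, (gB a Θ.flatten z).eval v = true := by
          intro z hz
          rw [eval_bigAndQ _ _ _ (by simp)] at hA
          apply hA
          rw [← hs]
          exact List.mem_map_of_mem ((Finset.mem_sort (α := ℕ) (· ≤ ·)).2 hz)
        have h2 := eval_CbB (v := v)
          (fun z hz haz i hi => gB_forces_u (hall z hz) haz i hi)
          (fun z hz haz j hj => gB_forces_v (hall z hz) haz j hj) hQ
        rw [h2]
        simp
      · rw [Bool.not_eq_true] at hA
        rw [hA]
        simp

end CirquentCalc

open CirquentCalc

/-- For φ = ∃X∀Y Θ with Θ quantifier-free in DNF over X ∪ Y, if φ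
is true then f(φ) is an instance of a binary tautology. -/
theorem qbf_true_implies_binary_instance (X Y : Finset ℕ) (Θ : DNF)
    (hXY : Disjoint X Y) (hvars : ∀ c ∈ Θ, ∀ l ∈ c, l.1 ∈ X ∪ Y)
    (h : QBFTrue X Θ) :
    ∃ B : Fml, Binary B ∧ Tautology B ∧ InstanceOf (fQBF X Θ) B := by
  obtain ⟨a, ha⟩ := h
  have hΘ : Θ ≠ [] := by
    intro h0
    subst h0
    have := ha a (fun _ _ => rfl)
    simp [evalDNF] at this
  exact ⟨BB a X Θ, binary_BB X Θ hΘ, taut_BB ha, ⟨σB a Θ.flatten, subst_BB X Θ⟩⟩
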